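/- Let a, b, τ > 0 with |1 − 1/τ²| < 1, s ∈ ℝ, σ > 0, and y ∈ ℝ; set a' = a + 1/2 and s' = s + y²/(2σ²). Then the marginal likelihood m(y) := ∫₀¹ ∫_ℝ N(y; β, σ²) N(β; 0, σ²(1/κ − 1)) π_{a,b,τ,s}(κ) dβ dκ satisfies m(y) = (2πσ²)^{−1/2} exp(−y²/(2σ²)) · [B(a', b)/B(a, b)] · Φ₁(b, 1; a'+b; s', 1−1/τ²) / Φ₁(b, 1; a+b; s, 1−1/τ²). -/

import Mathlib

open MeasureTheory Set

/-- The unnormalized hypergeometric-beta kernel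
`κ^{a−1} (1−κ)^{b−1} {1/τ² + (1 − 1/τ²)κ}^{−1} e^{−sκ}`. -/
noncomputable def hbKer (a b τ s κ : ℝ) : ℝ :=
  κ ^ (a - 1) * (1 - κ) ^ (b - 1) * (1 / τ ^ 2 + (1 - 1 / τ ^ 2) * κ)⁻¹ *
    Real.exp (-(s * κ))

/-- The normalizing constant `C(a,b,τ,s)`. -/
noncomputable def hbC (a b τ s : ℝ) : ℝ :=
  ∫ κ in Set.Ioo (0 : ℝ) 1, hbKer a b τ s κ

/-- The hypergeometric-beta density `π_{a,b,τ,s}` on `(0,1)`. -/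
noncomputable def hbPdf (a b τ s κ : ℝ) : ℝ :=
  (hbC a b τ s)⁻¹ * hbKer a b τ s κ

/-- The rising factorial `(q)_k = q (q+1) ⋯ (q+k−1)`. -/
noncomputable def risingFac (q : ℝ) (k : ℕ) : ℝ :=
  ∏ i ∈ Finset.range k, (q + (i : ℝ))

/-- The degenerate (Humbert) hypergeometric function of two variables
`Φ₁(α, β; γ; x, y) = Σ_{m,n≥0} [(α)_{m+n} (β)_n / ((γ)_{m+n} m! n!)] x^m y^n`. -/
noncomputable def Phi1 (α β γ x y : ℝ) : ℝ :=
  ∑' p : ℕ × ℕ,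
    risingFac α (p.1 + p.2) * risingFac β p.2 /
      (risingFac γ (p.1 + p.2) * (Nat.factorial p.1) * (Nat.factorial p.2)) *
      x ^ p.1 * y ^ p.2

/-- The Euler beta function `B(a,b) = Γ(a)Γ(b)/Γ(a+b)`. -/
noncomputable def betaFn (a b : ℝ) : ℝ :=
  Real.Gamma a * Real.Gamma b / Real.Gamma (a + b)

/-- The normal density with mean `μ` and variance `v`. -/
noncomputable def normPdf (y μ v : ℝ) : ℝ :=
  (2 * Real.pi * v) ^ (-(1 : ℝ) / 2) * Real.exp (-((y - μ) ^ 2) / (2 * v))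

/-- The joint density `f(β, κ) = N(y; β, σ²) N(β; 0, σ²(1/κ − 1)) π_{a,b,τ,s}(κ)`. -/
noncomputable def jointF (a b τ s σ y β κ : ℝ) : ℝ :=
  normPdf y β (σ ^ 2) * normPdf β 0 (σ ^ 2 * (1 / κ - 1)) * hbPdf a b τ s κ

lemma cpow_eq_ofReal {a b x : ℝ} (hx0 : 0 ≤ x) (hx1 : x ≤ 1) :
    (x:ℂ) ^ ((a:ℂ) - 1) * (1 - (x:ℂ)) ^ ((b:ℂ) - 1)
      = ((x ^ (a-1) * (1 - x) ^ (b-1) : ℝ) : ℂ) := by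
  have h1 : (0:ℝ) ≤ 1 - x := by linarith
  rw [Complex.ofReal_mul, Complex.ofReal_cpow hx0, Complex.ofReal_cpow h1]
  push_cast
  ring

lemma betaKer_integrableOn {a b : ℝ} (ha : 0 < a) (hb : 0 < b) :
    IntegrableOn (fun u : ℝ => u ^ (a - 1) * (1 - u) ^ (b - 1)) (Ioo 0 1) := by
  have hC := (Complex.betaIntegral_convergent (u := (a : ℂ)) (v := (b : ℂ))
    (by simpa using ha) (by simpa using hb))
  have hCI : IntegrableOn (fun x : ℝ => (x : ℂ) ^ ((a : ℂ) - 1) * (1 - (x : ℂ)) ^ ((b : ℂ) - 1))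
      (Ioc 0 1) volume := by
    simpa [intervalIntegrable_iff, uIoc_of_le (by norm_num : (0:ℝ) ≤ 1)] using hC
  have hre : IntegrableOn (fun x : ℝ =>
      ((x : ℂ) ^ ((a : ℂ) - 1) * (1 - (x : ℂ)) ^ ((b : ℂ) - 1)).re) (Ioc 0 1) volume :=
    hCI.re
  refine ((hre.congr_fun ?_ measurableSet_Ioc).mono_set Ioo_subset_Ioc_self)
  intro x hx
  simp only [cpow_eq_ofReal (le_of_lt hx.1) hx.2, Complex.ofReal_re]

lemma betaKer_integral {a b : ℝ} (ha : 0 < a) (hb : 0 < b) :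
    ∫ u in Ioo (0:ℝ) 1, u ^ (a - 1) * (1 - u) ^ (b - 1) = betaFn a b := by
  have key : Complex.Gamma a * Complex.Gamma b
      = Complex.Gamma ((a : ℂ) + b) * Complex.betaIntegral a b :=
    Complex.Gamma_mul_Gamma_eq_betaIntegral (by simpa using ha) (by simpa using hb)
  have hBI : Complex.betaIntegral (a : ℂ) (b : ℂ)
      = ((∫ u in Ioo (0:ℝ) 1, u ^ (a - 1) * (1 - u) ^ (b - 1) : ℝ) : ℂ) := by
    rw [Complex.betaIntegral, intervalIntegral.integral_of_le (by norm_num : (0:ℝ) ≤ 1)]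
    calc (∫ x in Ioc (0:ℝ) 1, (x:ℂ) ^ ((a:ℂ) - 1) * (1 - (x:ℂ)) ^ ((b:ℂ) - 1))
        = ∫ x in Ioc (0:ℝ) 1, ((x ^ (a-1) * (1 - x) ^ (b-1) : ℝ) : ℂ) := by
          refine setIntegral_congr_fun measurableSet_Ioc fun x hx => ?_
          exact cpow_eq_ofReal (le_of_lt hx.1) hx.2
      _ = ((∫ x in Ioc (0:ℝ) 1, x ^ (a-1) * (1 - x) ^ (b-1) : ℝ) : ℂ) := integral_ofReal
      _ = _ := by rw [integral_Ioc_eq_integral_Ioo]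
  rw [hBI, show ((a:ℂ)+b) = ((a+b : ℝ) : ℂ) by push_cast; ring,
    Complex.Gamma_ofReal, Complex.Gamma_ofReal, Complex.Gamma_ofReal] at key
  have h2 : Real.Gamma a * Real.Gamma b
      = Real.Gamma (a+b) * ∫ u in Ioo (0:ℝ) 1, u ^ (a - 1) * (1 - u) ^ (b - 1) := by
    exact_mod_cast key
  have hG : Real.Gamma (a + b) ≠ 0 := (Real.Gamma_pos_of_pos (by linarith)).ne'
  rw [betaFn]
  field_simp
  linarith [h2]
lemma risingFac_pos {q : ℝ} (hq : 0 < q) (k : ℕ) : 0 < risingFac q k :=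
  Finset.prod_pos fun i _ => by positivity

lemma risingFac_one (n : ℕ) : risingFac 1 n = (Nat.factorial n : ℝ) := by
  induction n with
  | zero => simp [risingFac]
  | succ n ih =>
    rw [risingFac, Finset.prod_range_succ, ← risingFac, ih, Nat.factorial_succ]
    push_cast
    ring

lemma Gamma_add_nat {q : ℝ} (hq : 0 < q) (k : ℕ) :
    Real.Gamma (q + k) = risingFac q k * Real.Gamma q := by
  induction k with
  | zero => simp [risingFac]
  | succ k ih =>
    have h1 : q + (k + 1 : ℕ) = (q + k) + 1 := by push_cast; ring
    rw [h1, Real.Gamma_add_one (by positivity), ih]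
    rw [show risingFac q (k+1) = risingFac q k * (q + k) from Finset.prod_range_succ _ _]
    rw [risingFac]
    ring

lemma betaFn_shift {a b : ℝ} (ha : 0 < a) (hb : 0 < b) (k : ℕ) :
    betaFn a (b + k) = betaFn a b * risingFac b k / risingFac (a + b) k := by
  have h1 : a + (b + k) = (a + b) + k := by ring
  rw [betaFn, betaFn, h1, Gamma_add_nat hb, Gamma_add_nat (by linarith)]
  have h2 : Real.Gamma (a + b) ≠ 0 := (Real.Gamma_pos_of_pos (by linarith)).ne'
  have h3 : risingFac (a + b) k ≠ 0 := (risingFac_pos (by linarith) k).ne'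
  field_simp

lemma hbC_eq {a b τ s : ℝ} (ha : 0 < a) (hb : 0 < b) (hτ' : |1 - 1 / τ ^ 2| < 1) :
    hbC a b τ s = Real.exp (-s) * (betaFn a b * Phi1 b 1 (a + b) s (1 - 1 / τ ^ 2)) := by
  set z : ℝ := 1 - 1 / τ ^ 2 with hz
  set F : ℕ × ℕ → ℝ → ℝ := fun p κ =>
    (s ^ p.1 / (Nat.factorial p.1) : ℝ) * z ^ p.2 *
      (κ ^ (a - 1) * (1 - κ) ^ (b - 1) * (1 - κ) ^ (p.1 + p.2)) with hF
  have hexp_tsum : ∀ x : ℝ, Real.exp x = ∑' m : ℕ, x ^ m / (Nat.factorial m) := by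
    intro x
    rw [Real.exp_eq_exp_ℝ, NormedSpace.exp_eq_tsum_div]
  -- pointwise expansion
  have hpt : ∀ κ ∈ Ioo (0:ℝ) 1, hbKer a b τ s κ = Real.exp (-s) * ∑' p : ℕ × ℕ, F p κ := by
    intro κ hκ
    have hw : 0 < 1 - κ := by linarith [hκ.2]
    have hw1 : 1 - κ < 1 := by linarith [hκ.1]
    have hzw : |z * (1 - κ)| < 1 := by
      rw [abs_mul, abs_of_pos hw]
      nlinarith [abs_nonneg z]
    have hgs : Summable fun n : ℕ => ‖(z * (1 - κ)) ^ n‖ := by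
      simpa only [Real.norm_eq_abs, abs_pow] using
        summable_geometric_of_lt_one (abs_nonneg (z * (1 - κ))) hzw
    have hes : Summable fun m : ℕ => ‖(s * (1 - κ)) ^ m / (Nat.factorial m : ℝ)‖ := by
      simpa only [Real.norm_eq_abs, abs_div, abs_pow, Nat.abs_cast] using
        Real.summable_pow_div_factorial |s * (1 - κ)|
    have hprod : Real.exp (s * (1 - κ)) * (1 - z * (1 - κ))⁻¹
        = ∑' p : ℕ × ℕ, ((s * (1 - κ)) ^ p.1 / (Nat.factorial p.1 : ℝ)) * (z * (1 - κ)) ^ p.2 := by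
      rw [hexp_tsum (s * (1 - κ)), ← tsum_geometric_of_abs_lt_one hzw]
      exact tsum_mul_tsum_of_summable_norm hes hgs
    have hden : (1 / τ ^ 2 + (1 - 1 / τ ^ 2) * κ) = 1 - z * (1 - κ) := by
      rw [hz]; ring
    have hexp : Real.exp (-(s * κ)) = Real.exp (-s) * Real.exp (s * (1 - κ)) := by
      rw [← Real.exp_add]; congr 1; ring
    rw [hbKer, hden, hexp]
    have : κ ^ (a - 1) * (1 - κ) ^ (b - 1) * (1 - z * (1 - κ))⁻¹
        * (Real.exp (-s) * Real.exp (s * (1 - κ)))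
        = Real.exp (-s) * ((κ ^ (a - 1) * (1 - κ) ^ (b - 1))
            * (Real.exp (s * (1 - κ)) * (1 - z * (1 - κ))⁻¹)) := by ring
    rw [this, hprod, ← tsum_mul_left]
    congr 1
    exact tsum_congr fun p => by
      rw [hF]; simp only; rw [mul_pow, mul_pow, pow_add]; ring
  -- integrability and value of each term
  have hbk : ∀ k : ℕ, (0:ℝ) < b + k := fun k => by positivity
  have hcongr : ∀ p : ℕ × ℕ, ∀ κ ∈ Ioo (0:ℝ) 1,
      (s ^ p.1 / (Nat.factorial p.1) : ℝ) * z ^ p.2 *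
        (κ ^ (a - 1) * (1 - κ) ^ ((b + (p.1 + p.2 : ℕ)) - 1)) = F p κ := by
    intro p κ hκ
    have hw : 0 < 1 - κ := by linarith [hκ.2]
    rw [hF]
    simp only
    rw [show ((1:ℝ) - κ) ^ (p.1 + p.2) = (1 - κ) ^ ((p.1 + p.2 : ℕ) : ℝ) by
      rw [Real.rpow_natCast], mul_assoc (κ ^ (a-1)), ← Real.rpow_add hw]
    ring_nf
  have hint : ∀ p : ℕ × ℕ, IntegrableOn (F p) (Ioo (0:ℝ) 1) := by
    intro p
    exact MeasureTheory.IntegrableOn.congr_fun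
      ((betaKer_integrableOn ha (hbk (p.1 + p.2))).const_mul _)
      (fun κ hκ => hcongr p κ hκ) measurableSet_Ioo
  have hval : ∀ p : ℕ × ℕ, (∫ κ in Ioo (0:ℝ) 1, F p κ)
      = (s ^ p.1 / (Nat.factorial p.1) : ℝ) * z ^ p.2 * betaFn a (b + (p.1 + p.2 : ℕ)) := by
    intro p
    rw [← setIntegral_congr_fun measurableSet_Ioo (fun κ hκ => hcongr p κ hκ),
      integral_const_mul, betaKer_integral ha (hbk (p.1 + p.2))]
  -- summability of the integrals of norms
  have hcsum : Summable fun p : ℕ × ℕ =>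
      (|s| ^ p.1 / (Nat.factorial p.1) : ℝ) * |z| ^ p.2 * betaFn a b := by
    refine Summable.mul_right _ ?_
    exact (Real.summable_pow_div_factorial |s|).mul_of_nonneg
      (summable_geometric_of_lt_one (abs_nonneg z) hτ')
      (fun m => by positivity) (fun n => by positivity)
  have hbetapos : 0 < betaFn a b := by
    rw [betaFn]
    have h1 := Real.Gamma_pos_of_pos ha
    have h2 := Real.Gamma_pos_of_pos hb
    have h3 := Real.Gamma_pos_of_pos (show (0:ℝ) < a + b by linarith)
    positivity
  have hnorm_le : ∀ p : ℕ × ℕ, (∫ κ in Ioo (0:ℝ) 1, ‖F p κ‖)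
      ≤ (|s| ^ p.1 / (Nat.factorial p.1) : ℝ) * |z| ^ p.2 * betaFn a b := by
    intro p
    have hmono : (∫ κ in Ioo (0:ℝ) 1, ‖F p κ‖)
        ≤ ∫ κ in Ioo (0:ℝ) 1,
            (|s| ^ p.1 / (Nat.factorial p.1) : ℝ) * |z| ^ p.2 * (κ ^ (a-1) * (1-κ) ^ (b-1)) := by
      refine setIntegral_mono_on (hint p).norm
        ((betaKer_integrableOn ha hb).const_mul _) measurableSet_Ioo ?_
      intro κ hκ
      have hκ0 : 0 < κ := hκ.1
      have hw : 0 < 1 - κ := by linarith [hκ.2]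
      have hwk : (1 - κ) ^ (p.1 + p.2) ≤ 1 :=
        pow_le_one₀ (le_of_lt hw) (by linarith [hκ.1])
      have h1 : (0:ℝ) ≤ κ ^ (a-1) := (Real.rpow_pos_of_pos hκ0 _).le
      have h2 : (0:ℝ) ≤ (1-κ) ^ (b-1) := (Real.rpow_pos_of_pos hw _).le
      rw [hF]
      simp only
      rw [norm_mul, norm_mul]
      have e1 : ‖(s ^ p.1 / (Nat.factorial p.1) : ℝ)‖ = |s| ^ p.1 / (Nat.factorial p.1) := by
        rw [norm_div, norm_pow]
        simp [Nat.abs_cast]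
      have e2 : ‖z ^ p.2‖ = |z| ^ p.2 := by rw [norm_pow]; rfl
      have e3 : ‖κ ^ (a-1) * (1-κ) ^ (b-1) * (1-κ) ^ (p.1 + p.2)‖
          = κ ^ (a-1) * (1-κ) ^ (b-1) * (1-κ) ^ (p.1 + p.2) := by
        rw [Real.norm_of_nonneg]
        positivity
      rw [e1, e2, e3]
      have hle : κ ^ (a-1) * (1-κ) ^ (b-1) * (1-κ) ^ (p.1 + p.2)
          ≤ κ ^ (a-1) * (1-κ) ^ (b-1) := by
        nlinarith [mul_pos (Real.rpow_pos_of_pos hκ0 (a-1)) (Real.rpow_pos_of_pos hw (b-1)),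
          pow_nonneg (le_of_lt hw) (p.1 + p.2)]
      have hcpos : (0:ℝ) ≤ |s| ^ p.1 / (Nat.factorial p.1) * |z| ^ p.2 := by positivity
      exact mul_le_mul_of_nonneg_left hle hcpos
    rw [integral_const_mul, betaKer_integral ha hb] at hmono
    exact hmono
  have hsum_norm : Summable fun p : ℕ × ℕ => ∫ κ in Ioo (0:ℝ) 1, ‖F p κ‖ :=
    hcsum.of_nonneg_of_le (fun p => integral_nonneg fun κ => norm_nonneg _) hnorm_le
  have hinterchange :=
    MeasureTheory.integral_tsum_of_summable_integral_norm hint hsum_norm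
  have hterm : ∀ p : ℕ × ℕ, (∫ κ in Ioo (0:ℝ) 1, F p κ)
      = betaFn a b * (risingFac b (p.1 + p.2) * risingFac 1 p.2 /
          (risingFac (a + b) (p.1 + p.2) * (Nat.factorial p.1) * (Nat.factorial p.2)) *
          s ^ p.1 * z ^ p.2) := by
    intro p
    rw [hval p, betaFn_shift ha hb (p.1 + p.2), risingFac_one]
    have h1 : (Nat.factorial p.1 : ℝ) ≠ 0 := Nat.cast_ne_zero.mpr (Nat.factorial_ne_zero _)
    have h2 : (Nat.factorial p.2 : ℝ) ≠ 0 := Nat.cast_ne_zero.mpr (Nat.factorial_ne_zero _)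
    have h3 : risingFac (a + b) (p.1 + p.2) ≠ 0 :=
      (risingFac_pos (by linarith) _).ne'
    field_simp
  rw [hbC, setIntegral_congr_fun measurableSet_Ioo hpt, integral_const_mul, ← hinterchange,
    tsum_congr hterm, tsum_mul_left, Phi1]
lemma rpow_neg_half {x : ℝ} (hx : 0 < x) : x ^ (-(1:ℝ)/2) = Real.sqrt x⁻¹ := by
  rw [show -(1:ℝ)/2 = -(1/2) by norm_num, Real.rpow_neg hx.le, ← Real.sqrt_eq_rpow,
    ← Real.sqrt_inv]

lemma inner_gauss {v1 v2 : ℝ} (y : ℝ) (h1 : 0 < v1) (h2 : 0 < v2) :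
    ∫ β : ℝ, normPdf y β v1 * normPdf β 0 v2
      = (2 * Real.pi * (v1 + v2)) ^ (-(1:ℝ)/2) * Real.exp (-(y^2) / (2*(v1+v2))) := by
  have hπ := Real.pi_pos
  set T := v1 + v2 with hT
  have hTpos : 0 < T := by positivity
  set c := T / (2*v1*v2) with hc
  have hcpos : 0 < c := by positivity
  set μ := v2 * y / T with hμ
  have hfun : ∀ β : ℝ, normPdf y β v1 * normPdf β 0 v2
      = ((2*Real.pi*v1) ^ (-(1:ℝ)/2) * (2*Real.pi*v2) ^ (-(1:ℝ)/2)
          * Real.exp (-(y^2) / (2*T))) * Real.exp (-c * (β - μ)^2) := by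
    intro β
    rw [normPdf, normPdf, mul_mul_mul_comm]
    have hexp : Real.exp (-((y - β)^2)/(2*v1)) * Real.exp (-((β-0)^2)/(2*v2))
        = Real.exp (-(y^2)/(2*T)) * Real.exp (-c*(β-μ)^2) := by
      rw [← Real.exp_add, ← Real.exp_add]
      congr 1
      rw [hc, hμ, hT]
      field_simp
      ring
    rw [hexp]
    ring
  rw [funext hfun, integral_const_mul]
  have hgauss : ∫ β : ℝ, Real.exp (-c * (β - μ)^2) = Real.sqrt (Real.pi / c) := by
    calc ∫ β : ℝ, Real.exp (-c * (β - μ)^2)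
        = ∫ β : ℝ, Real.exp (-c * β^2) :=
          MeasureTheory.integral_sub_right_eq_self (fun β => Real.exp (-c * β^2)) μ
      _ = Real.sqrt (Real.pi / c) := integral_gaussian c
  rw [hgauss]
  have hkey : (2*Real.pi*v1) ^ (-(1:ℝ)/2) * (2*Real.pi*v2) ^ (-(1:ℝ)/2)
      * Real.sqrt (Real.pi / c) = (2*Real.pi*T) ^ (-(1:ℝ)/2) := by
    rw [rpow_neg_half (by positivity), rpow_neg_half (by positivity),
      rpow_neg_half (by positivity), ← Real.sqrt_mul (by positivity),
      ← Real.sqrt_mul (by positivity)]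
    congr 1
    rw [hc]
    field_simp
  calc (2*Real.pi*v1) ^ (-(1:ℝ)/2) * (2*Real.pi*v2) ^ (-(1:ℝ)/2)
        * Real.exp (-(y^2) / (2*T)) * Real.sqrt (Real.pi / c)
      = ((2*Real.pi*v1) ^ (-(1:ℝ)/2) * (2*Real.pi*v2) ^ (-(1:ℝ)/2)
        * Real.sqrt (Real.pi / c)) * Real.exp (-(y^2) / (2*T)) := by ring
    _ = _ := by rw [hkey]

theorem hb_marginal_likelihood (a b τ s σ y : ℝ) (ha : 0 < a) (hb : 0 < b)
    (hτ : 0 < τ) (hτ' : |1 - 1 / τ ^ 2| < 1) (hσ : 0 < σ) :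
    (∫ κ in Set.Ioo (0 : ℝ) 1, ∫ β : ℝ, jointF a b τ s σ y β κ) =
      (2 * Real.pi * σ ^ 2) ^ (-(1 : ℝ) / 2) * Real.exp (-(y ^ 2) / (2 * σ ^ 2)) *
        (betaFn (a + 1 / 2) b / betaFn a b) *
        (Phi1 b 1 (a + 1 / 2 + b) (s + y ^ 2 / (2 * σ ^ 2)) (1 - 1 / τ ^ 2) /
          Phi1 b 1 (a + b) s (1 - 1 / τ ^ 2)) := by
  have hπ := Real.pi_pos
  have hσ2 : (0:ℝ) < σ ^ 2 := by positivity
  have hinner : ∀ κ ∈ Ioo (0:ℝ) 1,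
      (∫ β : ℝ, jointF a b τ s σ y β κ)
        = (hbC a b τ s)⁻¹ * ((2 * Real.pi * σ ^ 2) ^ (-(1:ℝ)/2) *
            hbKer (a + 1/2) b τ (s + y ^ 2 / (2 * σ ^ 2)) κ) := by
    intro κ hκ
    have hκ0 : 0 < κ := hκ.1
    have hκ1 : κ < 1 := hκ.2
    have hrat : (0:ℝ) < 1/κ - 1 := by
      have : 1 < 1/κ := by rw [lt_div_iff₀ hκ0]; linarith
      linarith
    have hv2 : (0:ℝ) < σ ^ 2 * (1/κ - 1) := by positivity
    have step1 : (∫ β : ℝ, jointF a b τ s σ y β κ)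
        = (∫ β : ℝ, normPdf y β (σ^2) * normPdf β 0 (σ^2 * (1/κ - 1))) * hbPdf a b τ s κ := by
      rw [← integral_mul_const]
      rfl
    rw [step1, inner_gauss y hσ2 hv2]
    have hsum : σ ^ 2 + σ ^ 2 * (1/κ - 1) = σ ^ 2 / κ := by field_simp; ring
    rw [hsum]
    have h1 : (2 * Real.pi * (σ^2/κ)) ^ (-(1:ℝ)/2)
        = (2 * Real.pi * σ^2) ^ (-(1:ℝ)/2) * κ ^ ((1:ℝ)/2) := by
      rw [show 2*Real.pi*(σ^2/κ) = (2*Real.pi*σ^2)/κ by ring,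
        Real.div_rpow (by positivity) hκ0.le, div_eq_mul_inv, ← Real.rpow_neg hκ0.le]
      norm_num
    have h2 : Real.exp (-(y^2) / (2*(σ^2/κ))) = Real.exp (-(y^2/(2*σ^2))*κ) := by
      congr 1
      field_simp
    have h3 : κ ^ ((1:ℝ)/2) * (hbKer a b τ s κ * Real.exp (-(y^2/(2*σ^2))*κ))
        = hbKer (a + 1/2) b τ (s + y^2/(2*σ^2)) κ := by
      rw [hbKer, hbKer]
      have e1 : κ ^ (a + 1/2 - 1) = κ ^ ((1:ℝ)/2) * κ ^ (a - 1) := by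
        rw [← Real.rpow_add hκ0]
        congr 1
        ring
      have e2 : Real.exp (-((s + y^2/(2*σ^2))*κ))
          = Real.exp (-(s*κ)) * Real.exp (-(y^2/(2*σ^2))*κ) := by
        rw [← Real.exp_add]
        congr 1
        ring
      rw [e1, e2]
      ring
    rw [hbPdf, h1, h2, ← h3]
    ring
  rw [setIntegral_congr_fun measurableSet_Ioo hinner, integral_const_mul, integral_const_mul]
  have houter : (∫ κ in Ioo (0:ℝ) 1, hbKer (a + 1/2) b τ (s + y ^ 2 / (2 * σ ^ 2)) κ)
      = hbC (a + 1/2) b τ (s + y ^ 2 / (2 * σ ^ 2)) := rfl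
  rw [houter, hbC_eq ha hb hτ', hbC_eq (by linarith : (0:ℝ) < a + 1/2) hb hτ']
  have hexp : Real.exp (-(s + y^2/(2*σ^2)))
      = Real.exp (-s) * Real.exp (-(y^2) / (2*σ^2)) := by
    rw [← Real.exp_add]
    congr 1
    ring
  rw [hexp]
  have hE : Real.exp (-s) ≠ 0 := Real.exp_ne_zero _
  have key : ∀ (P E Ey B Φ B' Φ' : ℝ), E ≠ 0 →
      (E * (B * Φ))⁻¹ * (P * (E * Ey * (B' * Φ'))) = P * Ey * (B' / B) * (Φ' / Φ) := by
    intro P E Ey B Φ B' Φ' hE0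
    rw [mul_inv, mul_inv, div_eq_mul_inv, div_eq_mul_inv,
      show E⁻¹ * (B⁻¹ * Φ⁻¹) * (P * (E * Ey * (B' * Φ')))
        = (E * E⁻¹) * (P * Ey * (B' * B⁻¹) * (Φ' * Φ⁻¹)) from by ring,
      mul_inv_cancel₀ hE0, one_mul]
  exact key _ _ _ _ _ _ _ hE
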